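/- For all integers 0 ≤ k ≤ j, the following identity holds in ℚ(q, a): ∑_{h=k}^{j} (−q)^h q^{h²} [j−k; h−k]_+ · (a² q^{2−2j−2h}; q²)_j / (q²;q²)_j = (−q)^k q^{k²} · (a² q^{2−2j−2k}; q²)_k / (q²;q²)_k. -/

import Mathlib

noncomputable section

open Finset

/-- The field `ℚ(q, a)` of rational functions in two variables. -/
abbrev F : Type := FractionRing (MvPolynomial (Fin 2) ℚ)

/-- The variable `q`. -/
def q : F := algebraMap (MvPolynomial (Fin 2) ℚ) F (MvPolynomial.X 0)

/-- The variable `a`. -/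
def a : F := algebraMap (MvPolynomial (Fin 2) ℚ) F (MvPolynomial.X 1)

/-- The q-Pochhammer symbol `(x; y)_n = ∏_{j=0}^{n-1} (1 - x yʲ)`. -/
def qPoch (x y : F) (n : ℕ) : F := ∏ i ∈ Finset.range n, (1 - x * y ^ i)

/-- `(q²;q²)_m = ∏_{i=1}^{m} (1 - q^{2i})`. -/
def qp (m : ℕ) : F := qPoch (q ^ 2) (q ^ 2) m

/-- The positive quantum binomial coefficient `[N; k]₊`. -/
def qbin (N k : ℕ) : F := qp N / (qp k * qp (N - k))

/-! ### Auxiliary lemmas -/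

lemma hq0 : q ≠ 0 := by
  simp only [q, ne_eq, map_eq_zero_iff _ (IsFractionRing.injective (MvPolynomial (Fin 2) ℚ) F)]
  exact MvPolynomial.X_ne_zero 0

lemma ha0 : a ≠ 0 := by
  simp only [a, ne_eq, map_eq_zero_iff _ (IsFractionRing.injective (MvPolynomial (Fin 2) ℚ) F)]
  exact MvPolynomial.X_ne_zero 1

lemma one_sub_qpow_ne (n : ℕ) (hn : 0 < n) : (1 : F) - q ^ n ≠ 0 := by
  have : (1 : F) - q ^ n =
      algebraMap (MvPolynomial (Fin 2) ℚ) F (1 - MvPolynomial.X 0 ^ n) := by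
    simp [q, map_sub, map_pow]
  rw [this, ne_eq, map_eq_zero_iff _ (IsFractionRing.injective (MvPolynomial (Fin 2) ℚ) F)]
  intro h
  have h2 := congrArg MvPolynomial.constantCoeff h
  simp [MvPolynomial.constantCoeff_X, hn.ne'] at h2

lemma qPoch_succ (x y : F) (n : ℕ) :
    qPoch x y (n + 1) = qPoch x y n * (1 - x * y ^ n) := by
  simp [qPoch, Finset.prod_range_succ]

lemma qPoch_add (x y : F) (m n : ℕ) :
    qPoch x y (m + n) = qPoch x y m * qPoch (x * y ^ m) y n := by
  induction n with
  | zero => simp [qPoch]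
  | succ n ih =>
      rw [← add_assoc, qPoch_succ, ih, qPoch_succ, pow_add]
      ring

lemma qp_succ (n : ℕ) : qp (n + 1) = qp n * (1 - q ^ (2 * (n + 1))) := by
  rw [qp, qp, qPoch_succ]
  congr 2
  rw [← pow_mul]
  ring_nf

lemma qp_zero : qp 0 = 1 := by simp [qp, qPoch]

lemma qp_ne_zero (m : ℕ) : qp m ≠ 0 := by
  induction m with
  | zero => simp [qp_zero]
  | succ n ih =>
      rw [qp_succ]
      exact mul_ne_zero ih (one_sub_qpow_ne _ (by omega))

/-- A recursively defined Gaussian binomial coefficient. -/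
def gb : ℕ → ℕ → F
  | _, 0 => 1
  | 0, _ + 1 => 0
  | n + 1, k + 1 => q ^ (2 * (n - k)) * gb n k + gb n (k + 1)

lemma gb_zero (n : ℕ) : gb n 0 = 1 := by cases n <;> rfl

lemma gb_succ_succ (n k : ℕ) :
    gb (n+1) (k+1) = q ^ (2 * (n - k)) * gb n k + gb n (k + 1) := rfl

lemma gb_eq_zero_of_lt : ∀ {n k : ℕ}, n < k → gb n k = 0 := by
  intro n
  induction n with
  | zero => intro k hk; match k, hk with | k+1, _ => rfl
  | succ n ih =>
      intro k hk
      match k, hk with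
      | k+1, hk =>
        show q ^ (2*(n-k)) * gb n k + gb n (k+1) = 0
        rw [ih (by omega), ih (by omega)]
        ring

lemma gb_mul_qp : ∀ n k : ℕ, k ≤ n → gb n k * (qp k * qp (n - k)) = qp n := by
  intro n
  induction n with
  | zero => intro k hk; interval_cases k; simp [gb_zero, qp_zero]
  | succ n ih =>
      intro k hk
      match k with
      | 0 => simp [gb_zero, qp_zero]
      | k + 1 =>
        rcases eq_or_lt_of_le hk with h | h
        · have hkn : k = n := by omega
          subst hkn
          have hdiag : gb k k = 1 := by
            have hkk := ih k le_rfl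
            rw [Nat.sub_self, qp_zero, mul_one] at hkk
            exact mul_right_cancel₀ (qp_ne_zero k) (by rw [hkk, one_mul])
          show (q ^ (2*(k-k)) * gb k k + gb k (k+1)) * (qp (k+1) * qp (k+1-(k+1))) = qp (k+1)
          rw [gb_eq_zero_of_lt (n:=k) (k:=k+1) (by omega), hdiag, Nat.sub_self, Nat.sub_self,
            qp_zero]
          ring
        · have hkn : k + 1 ≤ n := by omega
          show (q ^ (2*(n-k)) * gb n k + gb n (k+1)) * (qp (k+1) * qp (n+1-(k+1))) = qp (n+1)
          have e1 : n + 1 - (k+1) = (n - k - 1) + 1 := by omega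
          have hqpk : qp (k+1) = qp k * (1 - q ^ (2*(k+1))) := qp_succ k
          have hqpnk : qp (n+1-(k+1)) = qp (n-k-1) * (1 - q ^ (2*(n-k))) := by
            have e4 : n - k - 1 + 1 = n - k := by omega
            rw [e1, qp_succ, e4]
          have hqpnk2 : qp (n-k) = qp (n-k-1) * (1 - q ^ (2*(n-k))) := by
            have e2 : n - k = (n - k - 1) + 1 := by omega
            have e4 : n - k - 1 + 1 = n - k := by omega
            rw [e2, qp_succ, e4]
          have ha := ih k (by omega)
          have hb := ih (k+1) hkn
          have e3 : n - (k+1) = n - k - 1 := by omega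
          rw [e3, hqpk] at hb
          rw [hqpnk2] at ha
          have epow : q ^ (2*(n-k)) * q ^ (2*(k+1)) = q ^ (2*(n+1)) := by
            rw [← pow_add]; congr 1; omega
          rw [hqpk, hqpnk, qp_succ n]
          linear_combination (q^(2*(n-k)) * (1 - q^(2*(k+1)))) * ha +
            (1 - q^(2*(n-k))) * hb - qp n * epow

lemma qbin_eq_gb (n k : ℕ) (h : k ≤ n) : qbin n k = gb n k := by
  rw [qbin, eq_comm, eq_div_iff (mul_ne_zero (qp_ne_zero k) (qp_ne_zero (n-k)))]
  exact gb_mul_qp n k h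

/-- The key q-Vandermonde-type identity. -/
lemma key (c d : F) (m : ℕ) :
    ∑ i ∈ range (m+1), gb m i * c^i * qPoch d (q^2) i * qPoch c (q^2) (m-i)
      = qPoch (c*d) (q^2) m := by
  induction m with
  | zero => simp [gb_zero, qPoch]
  | succ m ih =>
    have S2 : ∑ i ∈ range (m+1),
          gb m (i+1) * c^(i+1) * qPoch d (q^2) (i+1) * qPoch c (q^2) (m-i)
          + qPoch c (q^2) (m+1)
        = ∑ i ∈ range (m+1), gb m i * c^i * qPoch d (q^2) i * qPoch c (q^2) (m+1-i) := by
      have h := Finset.sum_range_succ'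
        (fun i => gb m i * c^i * qPoch d (q^2) i * qPoch c (q^2) (m+1-i)) (m+1)
      simp only [Nat.succ_sub_succ, pow_zero, gb_zero, one_mul, Nat.sub_zero] at h
      rw [Finset.sum_range_succ] at h
      rw [gb_eq_zero_of_lt (Nat.lt_succ_self m)] at h
      simp only [zero_mul, add_zero] at h
      have hd0 : qPoch d (q^2) 0 = 1 := by simp [qPoch]
      rw [hd0, one_mul] at h
      exact h.symm
    rw [Finset.sum_range_succ' _ (m+1)]
    have hf0 : gb (m+1) 0 * c^0 * qPoch d (q^2) 0 * qPoch c (q^2) (m+1-0)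
        = qPoch c (q^2) (m+1) := by simp [gb_zero, qPoch]
    rw [hf0]
    have expand : ∀ i ∈ range (m+1),
        gb (m+1) (i+1) * c^(i+1) * qPoch d (q^2) (i+1) * qPoch c (q^2) (m+1-(i+1))
        = q ^ (2*(m-i)) * gb m i * c^(i+1) * qPoch d (q^2) (i+1) * qPoch c (q^2) (m-i)
          + gb m (i+1) * c^(i+1) * qPoch d (q^2) (i+1) * qPoch c (q^2) (m-i) := by
      intro i _
      rw [gb_succ_succ, Nat.succ_sub_succ]
      ring
    rw [Finset.sum_congr rfl expand, Finset.sum_add_distrib, add_assoc, S2,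
      ← Finset.sum_add_distrib]
    have termwise : ∀ i ∈ range (m+1),
        q ^ (2*(m-i)) * gb m i * c^(i+1) * qPoch d (q^2) (i+1) * qPoch c (q^2) (m-i)
          + gb m i * c^i * qPoch d (q^2) i * qPoch c (q^2) (m+1-i)
        = gb m i * c^i * qPoch d (q^2) i * qPoch c (q^2) (m-i) * (1 - c*d*(q^2)^m) := by
      intro i hi
      have him : i ≤ m := by simpa [Nat.lt_succ_iff] using hi
      have e1 : m + 1 - i = (m - i) + 1 := by omega
      rw [e1, qPoch_succ d, qPoch_succ c]
      have h1 : (q:F)^(2*(m-i)) = (q^2)^(m-i) := by rw [pow_mul]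
      have h2 : ((q:F)^2)^(m-i) * (q^2)^i = (q^2)^m := by
        rw [← pow_add]; congr 1; omega
      rw [h1]
      linear_combination (-(gb m i * c^(i+1) * d * qPoch d (q^2) i *
        qPoch c (q^2) (m-i))) * h2
    rw [Finset.sum_congr rfl termwise, ← Finset.sum_mul, ih, qPoch_succ]

lemma q2pow_nat (s : ℕ) : ((q:F)^2)^s = q ^ ((2 * s : ℕ) : ℤ) := by
  rw [← pow_mul, zpow_natCast]

lemma zq_mul (z w : ℤ) : (q:F) ^ z * q ^ w = q ^ (z + w) := (zpow_add₀ hq0 z w).symm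

lemma zq_pow (z : ℤ) (n : ℕ) : ((q:F) ^ z) ^ n = q ^ (z * n) := by
  rw [← zpow_natCast ((q:F)^z) n, ← zpow_mul]

/-- Reflection of a finite q-Pochhammer with "negative" base. -/
lemma reflect (x y : F) (i : ℕ) (hxy : x * y * ((q:F)^2) ^ i = q^2) :
    qPoch x (q^2) i = (∏ s ∈ range i, (-(x * ((q:F)^2) ^ s))) * qPoch y (q^2) i := by
  have hxy' : ∀ s ∈ range i, x * y * ((q:F)^2)^(i-1) = 1 := by
    intro s hs
    have hi : 1 ≤ i := Nat.one_le_iff_ne_zero.mpr (by rintro rfl; simp at hs)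
    have h2 : ((q:F)^2) ^ i = ((q:F)^2)^(i-1) * q^2 := by
      rw [← pow_succ]; congr 1; omega
    have hq2 : ((q:F)^2) ≠ 0 := pow_ne_zero 2 hq0
    rw [h2] at hxy
    refine mul_right_cancel₀ hq2 ?_
    rw [one_mul]
    linear_combination hxy
  rw [qPoch, qPoch, ← Finset.prod_range_reflect (fun s => 1 - y * ((q:F)^2)^s) i,
    ← Finset.prod_mul_distrib]
  refine Finset.prod_congr rfl ?_
  intro s hs
  have hsi : s < i := Finset.mem_range.mp hs
  have key := hxy' s hs
  have hpow : ((q:F)^2)^s * ((q:F)^2)^(i-1-s) = ((q:F)^2)^(i-1) := by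
    rw [← pow_add]; congr 1; omega
  linear_combination (-x*y) * hpow - key

lemma prod_neg_base (x : F) (i : ℕ) :
    ∏ s ∈ range i, (-(x * ((q:F)^2)^s))
      = (-1)^i * x^i * ((q:F)^2) ^ (∑ s ∈ range i, s) := by
  calc ∏ s ∈ range i, (-(x * ((q:F)^2)^s))
      = ∏ s ∈ range i, ((-x) * ((q:F)^2)^s) := by
        refine Finset.prod_congr rfl fun s _ => by ring
    _ = (-x)^i * ((q:F)^2) ^ (∑ s ∈ range i, s) := by
        rw [Finset.prod_mul_distrib, Finset.prod_const, Finset.card_range,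
          Finset.prod_pow_eq_pow_sum]
    _ = (-1)^i * x^i * ((q:F)^2) ^ (∑ s ∈ range i, s) := by rw [neg_pow]

lemma gauss_sum (i : ℕ) : ((∑ s ∈ range i, s : ℕ) : ℤ) * 2 = (i:ℤ) * ((i:ℤ) - 1) := by
  cases i with
  | zero => simp
  | succ n =>
      have h := Finset.sum_range_id_mul_two (n+1)
      simp only [Nat.add_sub_cancel] at h
      have h' : ((∑ s ∈ range (n+1), s : ℕ) : ℤ) * 2 = ((n:ℤ)+1) * (n:ℤ) := by
        exact_mod_cast h
      rw [h']
      push_cast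
      ring

/-- The main term transformation. -/
lemma term_eq (j k i : ℕ) (hk : k ≤ j) (hi : i ≤ j - k) :
    (-q)^(k+i) * q^((k+i)^2) *
      qPoch (a^2 * q^(2 - 2*(j:ℤ) - 2*((k+i : ℕ):ℤ))) ((q:F)^2) j
    = (-q)^k * q^(k^2) * qPoch (a^2 * q^(2 - 2*(j:ℤ) - 2*(k:ℤ))) ((q:F)^2) k *
      ((a^2 * q^(2 - 2*(j:ℤ)))^i *
       qPoch ((a^2)⁻¹ * q^(2*(j:ℤ) + 2*(k:ℤ))) ((q:F)^2) i *
       qPoch (a^2 * q^(2 - 2*(j:ℤ))) ((q:F)^2) (j - k - i)) := by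
  have e0 : (2 : ℤ) - 2*(j:ℤ) - 2*((k+i : ℕ):ℤ)
      = 2 - 2*(j:ℤ) - 2*(k:ℤ) - 2*(i:ℤ) := by push_cast; ring
  set E : ℤ := 2 - 2*(j:ℤ) - 2*(k:ℤ) - 2*(i:ℤ) with hE
  rw [e0]
  -- split the length-j Pochhammer
  have e1 : j = i + (k + (j - k - i)) := by omega
  have hsplit : qPoch (a^2 * q^E) ((q:F)^2) j
      = qPoch (a^2 * q^E) ((q:F)^2) i *
        (qPoch (a^2 * q^(2 - 2*(j:ℤ) - 2*(k:ℤ))) ((q:F)^2) k *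
         qPoch (a^2 * q^(2 - 2*(j:ℤ))) ((q:F)^2) (j-k-i)) := by
    conv_lhs => rw [e1]
    rw [qPoch_add]
    have e2 : a^2 * q^E * ((q:F)^2)^i = a^2 * q^(2 - 2*(j:ℤ) - 2*(k:ℤ)) := by
      rw [q2pow_nat, mul_assoc, zq_mul]
      congr 1
      push_cast [hE]
      ring
    rw [e2, qPoch_add]
    have e3 : a^2 * q^(2 - 2*(j:ℤ) - 2*(k:ℤ)) * ((q:F)^2)^k = a^2 * q^(2-2*(j:ℤ)) := by
      rw [q2pow_nat, mul_assoc, zq_mul]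
      congr 1
      push_cast
      ring
    rw [e3]
  -- reflect the length-i Pochhammer
  have hcond : (a^2 * q^E) * ((a^2)⁻¹ * q^(2*(j:ℤ) + 2*(k:ℤ))) * ((q:F)^2)^i = q^2 := by
    have ha2 : (a:F)^2 * (a^2)⁻¹ = 1 := mul_inv_cancel₀ (pow_ne_zero 2 ha0)
    rw [q2pow_nat,
      show a^2 * q^E * ((a^2)⁻¹ * q^(2*(j:ℤ)+2*(k:ℤ))) * q^((2*i:ℕ):ℤ)
        = (a^2 * (a^2)⁻¹) * (q^E * q^(2*(j:ℤ)+2*(k:ℤ)) * q^((2*i:ℕ):ℤ)) from by ring,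
      ha2, one_mul, zq_mul, zq_mul,
      show E + (2*(j:ℤ)+2*(k:ℤ)) + ((2*i:ℕ):ℤ) = ((2:ℕ):ℤ) from by push_cast [hE]; ring,
      zpow_natCast]
  have hrefl := reflect (a^2 * q^E) ((a^2)⁻¹ * q^(2*(j:ℤ)+2*(k:ℤ))) i hcond
  rw [hsplit, hrefl, prod_neg_base]
  -- scalar identity
  have hT := gauss_sum i
  set T : ℕ := ∑ s ∈ range i, s with hTdef
  have hscal : (-q)^(k+i) * q^((k+i)^2) * ((-1)^i * (a^2 * q^E)^i * ((q:F)^2)^T)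
      = (-q)^k * q^(k^2) * (a^2 * q^(2 - 2*(j:ℤ)))^i := by
    rw [neg_pow q (k+i), neg_pow q k, mul_pow (a^2) (q^E) i,
      mul_pow (a^2) (q^(2-2*(j:ℤ))) i, zq_pow, zq_pow, q2pow_nat,
      ← zpow_natCast q (k+i), ← zpow_natCast q ((k+i)^2),
      ← zpow_natCast q k, ← zpow_natCast q (k^2)]
    have hsgn : ((-1:F))^(k+i) * (-1)^i = (-1)^k := by
      rw [pow_add, mul_assoc, ← mul_pow]
      simp
    calc (-1:F)^(k+i) * q^(((k+i):ℕ):ℤ) * q^((((k+i)^2 :ℕ)):ℤ) *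
          ((-1)^i * ((a^2)^i * q^(E*(i:ℤ))) * q^((2*T:ℕ):ℤ))
        = ((-1:F)^(k+i) * (-1)^i) * (a^2)^i *
          (q^(((k+i):ℕ):ℤ) * q^((((k+i)^2 :ℕ)):ℤ) * q^(E*(i:ℤ)) * q^((2*T:ℕ):ℤ)) := by
          ring
      _ = (-1:F)^k * (a^2)^i * (q^((k:ℕ):ℤ) * q^(((k^2:ℕ)):ℤ) * q^((2-2*(j:ℤ))*(i:ℤ))) := by
          rw [hsgn, zq_mul, zq_mul, zq_mul, zq_mul, zq_mul]
          congr 1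
          congr 1
          push_cast
          linear_combination hT
      _ = (-1:F)^k * q^((k:ℕ):ℤ) * q^(((k^2:ℕ)):ℤ) * ((a^2)^i * q^((2-2*(j:ℤ))*(i:ℤ))) := by
          ring
  linear_combination (qPoch ((a^2)⁻¹ * q^(2*(j:ℤ)+2*(k:ℤ))) ((q:F)^2) i *
    (qPoch (a^2 * q^(2 - 2*(j:ℤ) - 2*(k:ℤ))) ((q:F)^2) k *
     qPoch (a^2 * q^(2 - 2*(j:ℤ))) ((q:F)^2) (j-k-i))) * hscal

/-- Identity (4) in the proof of Lemma "closure of T UP":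
`∑_{h=k}^{j} (−q)^h q^{h²} [j−k; h−k]₊ (a²q^{2−2j−2h};q²)_j/(q²;q²)_j
 = (−q)^k q^{k²} (a²q^{2−2j−2k};q²)_k/(q²;q²)_k`. -/
theorem closure_sum_identity (j k : ℕ) (hk : k ≤ j) :
    ∑ h ∈ Finset.Icc k j,
      (-q) ^ h * q ^ (h ^ 2) * qbin (j - k) (h - k) *
        qPoch (a ^ 2 * q ^ (2 - 2 * (j : ℤ) - 2 * (h : ℤ))) (q ^ 2) j / qp j =
      (-q) ^ k * q ^ (k ^ 2) *
        qPoch (a ^ 2 * q ^ (2 - 2 * (j : ℤ) - 2 * (k : ℤ))) (q ^ 2) k / qp k := by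
  rw [← Finset.Ico_add_one_right_eq_Icc, Finset.sum_Ico_eq_sum_range]
  have hm : j + 1 - k = (j - k) + 1 := by omega
  rw [hm]
  have hterm : ∀ i ∈ range ((j-k)+1),
      (-q) ^ (k+i) * q ^ ((k+i) ^ 2) * qbin (j - k) ((k+i) - k) *
        qPoch (a ^ 2 * q ^ (2 - 2 * (j : ℤ) - 2 * ((k+i : ℕ) : ℤ))) (q ^ 2) j / qp j
      = ((-q) ^ k * q ^ (k ^ 2) *
          qPoch (a ^ 2 * q ^ (2 - 2 * (j : ℤ) - 2 * (k : ℤ))) (q ^ 2) k) *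
        (gb (j-k) i * (a^2 * q^(2 - 2*(j:ℤ)))^i *
         qPoch ((a^2)⁻¹ * q^(2*(j:ℤ) + 2*(k:ℤ))) (q^2) i *
         qPoch (a^2 * q^(2 - 2*(j:ℤ))) (q^2) ((j-k) - i)) / qp j := by
    intro i hi
    have him : i ≤ j - k := by
      have := Finset.mem_range.mp hi; omega
    have hik : (k + i) - k = i := by omega
    rw [hik, qbin_eq_gb (j-k) i him]
    have ht := term_eq j k i hk him
    have hdiv : (-q) ^ (k+i) * q ^ ((k+i) ^ 2) * gb (j-k) i *
        qPoch (a ^ 2 * q ^ (2 - 2 * (j : ℤ) - 2 * ((k+i : ℕ) : ℤ))) (q ^ 2) j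
      = ((-q) ^ k * q ^ (k ^ 2) *
          qPoch (a ^ 2 * q ^ (2 - 2 * (j : ℤ) - 2 * (k : ℤ))) (q ^ 2) k) *
        (gb (j-k) i * (a^2 * q^(2 - 2*(j:ℤ)))^i *
         qPoch ((a^2)⁻¹ * q^(2*(j:ℤ) + 2*(k:ℤ))) (q^2) i *
         qPoch (a^2 * q^(2 - 2*(j:ℤ))) (q^2) ((j-k) - i)) := by
      have e5 : j - k - i = (j - k) - i := rfl
      linear_combination (gb (j-k) i) * ht
    rw [div_eq_div_iff (qp_ne_zero j) (qp_ne_zero j)]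
    linear_combination (qp j) * hdiv
  rw [Finset.sum_congr rfl hterm, ← Finset.sum_div, ← Finset.mul_sum]
  have hkey := key (a^2 * q^(2 - 2*(j:ℤ))) ((a^2)⁻¹ * q^(2*(j:ℤ) + 2*(k:ℤ))) (j-k)
  have hsum : ∑ i ∈ range ((j-k)+1),
      gb (j-k) i * (a^2 * q^(2 - 2*(j:ℤ)))^i *
        qPoch ((a^2)⁻¹ * q^(2*(j:ℤ) + 2*(k:ℤ))) (q^2) i *
        qPoch (a^2 * q^(2 - 2*(j:ℤ))) (q^2) ((j-k) - i)
      = qPoch ((a^2 * q^(2 - 2*(j:ℤ))) * ((a^2)⁻¹ * q^(2*(j:ℤ) + 2*(k:ℤ)))) (q^2) (j-k) :=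
    hkey
  rw [hsum]
  -- identify the product as q^2 * (q^2)^k and relate to qp j / qp k
  have hcd : (a^2 * q^(2 - 2*(j:ℤ))) * ((a^2)⁻¹ * q^(2*(j:ℤ) + 2*(k:ℤ)))
      = (q^2) * ((q:F)^2)^k := by
    have ha2 : (a:F)^2 * (a^2)⁻¹ = 1 := mul_inv_cancel₀ (pow_ne_zero 2 ha0)
    rw [show a^2 * q^(2 - 2*(j:ℤ)) * ((a^2)⁻¹ * q^(2*(j:ℤ) + 2*(k:ℤ)))
        = (a^2 * (a^2)⁻¹) * (q^(2 - 2*(j:ℤ)) * q^(2*(j:ℤ) + 2*(k:ℤ))) from by ring,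
      ha2, one_mul, zq_mul,
      show (2 - 2*(j:ℤ)) + (2*(j:ℤ) + 2*(k:ℤ)) = ((2 + 2*k : ℕ):ℤ) from by push_cast; ring,
      zpow_natCast, show ((2 + 2*k : ℕ)) = 2 + 2*k from rfl, pow_add, pow_mul]
  rw [hcd]
  have hqpj : qp j = qp k * qPoch ((q^2) * ((q:F)^2)^k) (q^2) (j-k) := by
    have : j = k + (j - k) := by omega
    conv_lhs => rw [qp, this, qPoch_add]
    rfl
  rw [hqpj]
  have h1 := qp_ne_zero k
  have h2 : qPoch ((q^2) * ((q:F)^2)^k) (q^2) (j-k) ≠ 0 := by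
    intro h
    exact qp_ne_zero j (by rw [hqpj, h, mul_zero])
  field_simp
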